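/- Identification of the hazard of the outcome from observables under independent censoring: suppose Y and C are independent, and let ν¹ be the sub-distribution measure ν¹(A) = ℙ(Y ∈ A, Y ≤ C) for Borel A ⊆ ℝ. Then for every y ∈ ℝ with ℙ(min(Y, C) ≥ y) > 0, ∫_{(−∞, y]} ℙ(min(Y, C) ≥ s)⁻¹ dν¹(s) = ∫_{(−∞, y]} ℙ(Y ≥ s)⁻¹ dμ_Y(s), and both integrals are finite. (This says that the cumulative hazard (2) built from the observable pair (Q, δ) coincides with the cumulative hazard of the latent outcome Y.) -/

import Mathlib

open MeasureTheory ProbabilityTheory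

/-- **Identification of the hazard of the outcome from observables under independent
censoring**: if `Y ⫫ C` and `ν¹(A) = ℙ(Y ∈ A, Y ≤ C)`, then for every `y` with
`ℙ(min(Y,C) ≥ y) > 0`,
`∫_{(−∞,y]} ℙ(min(Y,C) ≥ s)⁻¹ dν¹(s) = ∫_{(−∞,y]} ℙ(Y ≥ s)⁻¹ dμ_Y(s)`,
and both integrals are finite. -/
theorem cumulative_hazard_identification
    {Ω : Type*} [MeasurableSpace Ω]
    (μ : Measure Ω) [IsProbabilityMeasure μ]
    (Y : Ω → ℝ) (hY : Measurable Y)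
    (C : Ω → ℝ) (hC : Measurable C)
    (hindep : IndepFun Y C μ)
    (ν : Measure ℝ)
    (hν : ∀ A : Set ℝ, MeasurableSet A → ν A = μ {ω | Y ω ∈ A ∧ Y ω ≤ C ω})
    (y : ℝ) (hy : 0 < μ {ω | y ≤ min (Y ω) (C ω)}) :
    (∫⁻ s in Set.Iic y, (μ {ω | s ≤ min (Y ω) (C ω)})⁻¹ ∂ν)
      = (∫⁻ s in Set.Iic y, (μ {ω | s ≤ Y ω})⁻¹ ∂(Measure.map Y μ)) ∧
    (∫⁻ s in Set.Iic y, (μ {ω | s ≤ min (Y ω) (C ω)})⁻¹ ∂ν) ≠ ⊤ ∧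
    (∫⁻ s in Set.Iic y, (μ {ω | s ≤ Y ω})⁻¹ ∂(Measure.map Y μ)) ≠ ⊤ := by
  set g : ℝ → ENNReal := fun s => μ {ω | s ≤ C ω} with hg
  set a : ℝ → ENNReal := fun s => μ {ω | s ≤ Y ω} with ha
  have hga : ∀ s, {ω | s ≤ C ω} = C ⁻¹' Set.Ici s := fun s => rfl
  have hgm : Measurable g := by
    have : Antitone g := fun s t hst => by
      apply measure_mono; intro ω hω; exact le_trans hst hω
    exact this.measurable
  have ham : Measurable a := by
    have : Antitone a := fun s t hst => by
      apply measure_mono; intro ω hω; exact le_trans hst hω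
    exact this.measurable
  -- independence product formula
  have hmin : ∀ s : ℝ, μ {ω | s ≤ min (Y ω) (C ω)} = a s * g s := by
    intro s
    have h := hindep.measure_inter_preimage_eq_mul (Set.Ici s) (Set.Ici s)
      measurableSet_Ici measurableSet_Ici
    have hset : Y ⁻¹' Set.Ici s ∩ C ⁻¹' Set.Ici s = {ω | s ≤ min (Y ω) (C ω)} := by
      ext ω; simp [le_min_iff, and_comm]
    rw [hset] at h
    exact h
  -- ν = withDensity
  have hmap : μ.map (fun ω => (Y ω, C ω)) = (μ.map Y).prod (μ.map C) :=
    (indepFun_iff_map_prod_eq_prod_map_map hY.aemeasurable hC.aemeasurable).mp hindep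
  have hνeq : ν = (μ.map Y).withDensity g := by
    refine Measure.ext fun A hA => ?_
    rw [hν A hA, withDensity_apply _ hA]
    have hS : MeasurableSet {p : ℝ × ℝ | p.1 ∈ A ∧ p.1 ≤ p.2} :=
      (hA.preimage measurable_fst).inter measurableSet_le'
    have h1 : {ω | Y ω ∈ A ∧ Y ω ≤ C ω}
        = (fun ω => (Y ω, C ω)) ⁻¹' {p : ℝ × ℝ | p.1 ∈ A ∧ p.1 ≤ p.2} := rfl
    rw [h1, ← Measure.map_apply (hY.prodMk hC) hS, hmap,
      Measure.prod_apply hS]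
    rw [← lintegral_indicator hA g]
    congr 1
    ext s
    by_cases hs : s ∈ A
    · have : Prod.mk s ⁻¹' {p : ℝ × ℝ | p.1 ∈ A ∧ p.1 ≤ p.2} = Set.Ici s := by
        ext c; simp [hs]
      rw [this, Set.indicator_of_mem hs, Measure.map_apply hC measurableSet_Ici]
      rfl
    · have : Prod.mk s ⁻¹' {p : ℝ × ℝ | p.1 ∈ A ∧ p.1 ≤ p.2} = ∅ := by
        ext c; simp [hs]
      rw [this, Set.indicator_of_notMem hs, measure_empty]
  -- lower bounds on Iic y
  have hbounds : ∀ s ∈ Set.Iic y, μ {ω | y ≤ min (Y ω) (C ω)} ≤ a s ∧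
      μ {ω | y ≤ min (Y ω) (C ω)} ≤ g s := by
    intro s hs
    constructor
    · apply measure_mono; intro ω hω
      have h' : y ≤ min (Y ω) (C ω) := hω
      exact le_trans hs (h'.trans (min_le_left _ _))
    · apply measure_mono; intro ω hω
      have h' : y ≤ min (Y ω) (C ω) := hω
      exact le_trans hs (h'.trans (min_le_right _ _))
  have hFm : Measurable fun s => (μ {ω | s ≤ min (Y ω) (C ω)})⁻¹ := by
    simp only [hmin]; exact (ham.mul hgm).inv
  -- main equality
  have hEq : (∫⁻ s in Set.Iic y, (μ {ω | s ≤ min (Y ω) (C ω)})⁻¹ ∂ν)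
      = ∫⁻ s in Set.Iic y, (a s)⁻¹ ∂(μ.map Y) := by
    rw [hνeq, restrict_withDensity measurableSet_Iic,
      lintegral_withDensity_eq_lintegral_mul _ hgm hFm]
    refine setLIntegral_congr_fun measurableSet_Iic ?_
    intro s hs
    obtain ⟨hay, hgy⟩ := hbounds s hs
    have hg0 : g s ≠ 0 := (hy.trans_le hgy).ne'
    have hgt : g s ≠ ⊤ := measure_ne_top _ _
    have hat : a s ≠ ⊤ := measure_ne_top _ _
    show g s * (μ {ω | s ≤ min (Y ω) (C ω)})⁻¹ = (a s)⁻¹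
    rw [hmin, ENNReal.mul_inv (Or.inr hgt) (Or.inl hat), ← mul_assoc,
      mul_comm (g s) (a s)⁻¹, mul_assoc, ENNReal.mul_inv_cancel hg0 hgt, mul_one]
  have hFin : (∫⁻ s in Set.Iic y, (a s)⁻¹ ∂(μ.map Y)) ≠ ⊤ := by
    have hle : (∫⁻ s in Set.Iic y, (a s)⁻¹ ∂(μ.map Y))
        ≤ ∫⁻ _ in Set.Iic y, (μ {ω | y ≤ min (Y ω) (C ω)})⁻¹ ∂(μ.map Y) := by
      refine setLIntegral_mono measurable_const fun s hs => ?_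
      exact ENNReal.inv_le_inv' (hbounds s hs).1
    refine ne_top_of_le_ne_top ?_ hle
    rw [setLIntegral_const]
    exact ENNReal.mul_ne_top (ENNReal.inv_ne_top.2 hy.ne') (measure_ne_top _ _)
  exact ⟨hEq, hEq ▸ hFin, hFin⟩
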